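/- Let 0 ≤ α < 1 be a real number. For each integer j ≥ 1 define P_j : [0,∞) → ℝ by P_j(t) = ((1−α)t + α)^{j−1} / ((1−α)t + 1)^{j+1}. Then P_j(0) = α^{j−1} for every j ≥ 1, and for every t ≥ 0 and every j ≥ 1 the derivative satisfies d P_j/dt (t) = (j+1)·P_{j+1}(t) + (j−1)·P_{j−1}(t) − 2j·P_j(t), where for j = 1 the term (j−1)·P_{j−1}(t) is zero. -/

import Mathlib

/-- `P_j(t) = ((1−α)t + α)^{j−1} / ((1−α)t + 1)^{j+1}`. -/
noncomputable def zhangWalkSol (α : ℝ) (j : ℕ) (t : ℝ) : ℝ :=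
  ((1 - α) * t + α) ^ (j - 1) / ((1 - α) * t + 1) ^ (j + 1)

/-- For `0 ≤ α < 1`, the functions `P_j(t) = ((1−α)t+α)^{j−1}/((1−α)t+1)^{j+1}`
on `[0,∞)` satisfy `P_j(0) = α^{j−1}` and the system of ODEs
`dP_j/dt = (j+1)P_{j+1} + (j−1)P_{j−1} − 2j·P_j` for all `j ≥ 1` and `t ≥ 0`
(where for `j = 1` the coefficient `j − 1` vanishes). -/
theorem zhangWalkSol_solves_system (α : ℝ) (h0 : 0 ≤ α) (h1 : α < 1) :
    (∀ j : ℕ, 1 ≤ j → zhangWalkSol α j 0 = α ^ (j - 1)) ∧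
    (∀ j : ℕ, 1 ≤ j → ∀ t : ℝ, 0 ≤ t →
      HasDerivWithinAt (zhangWalkSol α j)
        (((j : ℝ) + 1) * zhangWalkSol α (j + 1) t
          + ((j : ℝ) - 1) * zhangWalkSol α (j - 1) t
          - 2 * (j : ℝ) * zhangWalkSol α j t)
        (Set.Ici 0) t) := by
  constructor
  · intro j hj
    simp [zhangWalkSol]
  · intro j hj t ht
    have hc : (0:ℝ) < 1 - α := by linarith
    have hv : (0:ℝ) < (1 - α) * t + 1 := by nlinarith
    have hvne : ((1 - α) * t + 1) ^ (j + 1) ≠ 0 := pow_ne_zero _ (ne_of_gt hv)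
    have hu : HasDerivAt (fun s : ℝ => (1 - α) * s + α) (1 - α) t := by
      simpa using ((hasDerivAt_id t).const_mul (1 - α)).add_const α
    have hw : HasDerivAt (fun s : ℝ => (1 - α) * s + 1) (1 - α) t := by
      simpa using ((hasDerivAt_id t).const_mul (1 - α)).add_const 1
    have hnum := hu.pow (j - 1)
    have hden := hw.pow (j + 1)
    have hdiv := hnum.div hden hvne
    have hform : HasDerivAt (zhangWalkSol α j)
        (((↑(j - 1) * ((1 - α) * t + α) ^ (j - 1 - 1) * (1 - α)) *
            ((1 - α) * t + 1) ^ (j + 1) -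
          ((1 - α) * t + α) ^ (j - 1) *
            (↑(j + 1) * ((1 - α) * t + 1) ^ (j + 1 - 1) * (1 - α))) /
          (((1 - α) * t + 1) ^ (j + 1)) ^ 2) t := by
      have hfun : zhangWalkSol α j = (fun s : ℝ => (1 - α) * s + α) ^ (j - 1) / (fun s : ℝ => (1 - α) * s + 1) ^ (j + 1) := by
        funext s
        simp [zhangWalkSol]
      rw [hfun]
      exact hdiv
    refine HasDerivWithinAt.congr_deriv (hform.hasDerivWithinAt) ?_
    obtain ⟨k, rfl⟩ := Nat.exists_eq_add_of_le hj
    match k with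
    | 0 =>
      simp only [zhangWalkSol]
      norm_num
      field_simp
      ring
    | Nat.succ m =>
      rw [show 1 + Nat.succ m = m + 2 from by omega]
      simp only [zhangWalkSol, show m + 2 - 1 = m + 1 from rfl,
        show m + 1 - 1 = m from rfl, show m + 2 + 1 = m + 3 from rfl,
        show m + 2 - 1 - 1 = m from rfl, show m + 2 + 1 - 1 = m + 2 from rfl,
        show m + 3 + 1 = m + 4 from rfl]
      push_cast
      field_simp
      ring
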